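/- Let (X^{n+1}, g₊) with n even be such that g₊ = r^{-2}(dr² + g_r) near the boundary M, and let φ̃ : X̄ → N be a map of class Cⁿ on X̄ that is harmonic with respect to g₊. If the normal-coordinate representative U = exp^{-1}_{φ∘p_M}∘φ̃ admits an asymptotic expansion U = U₂r² + ⋯ + U_{n−2}r^{n−2} + H^g rⁿ log r + O(rⁿ), then H^g = 0; i.e. Cⁿ-regularity up to the boundary of a harmonic map forces the conformal-harmonicity of its boundary value φ = φ̃|_M. -/

import Mathlib

/-!
STATEMENT 18: Let (X^{n+1},g₊), n even, with g₊ = r^{-2}(dr²+g_r) near M, and let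
φ̃ : X̄ → N be Cⁿ up to the boundary and harmonic for g₊.  If the normal-coordinate
representative U = exp^{-1}_{φ∘p_M}∘φ̃ has the expansion
U = U₂r² + ⋯ + U_{n−2}r^{n−2} + H^g·rⁿ log r + O(rⁿ), then H^g = 0 : Cⁿ regularity
forces the conformal-harmonicity of the boundary value.

Model (at a fixed boundary point, values in a normed space V): the expansion holds
for r ∈ (0,ε) with remainder Rm = O(rⁿ) as r → 0⁺, and Cⁿ regularity of U at r = 0
is encoded by the existence of a Taylor polynomial of order n approximating U to
o(rⁿ) (Taylor's theorem).  Conclusion: H = 0.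
-/

open Topology Asymptotics Filter Polynomial

theorem stmt_18 {V : Type*} [NormedAddCommGroup V] [NormedSpace ℝ V]
    (n : ℕ) (hn : 2 ≤ n) (hne : Even n) (ε : ℝ) (hε : 0 < ε)
    (U Rm : ℝ → V) (c : ℕ → V) (H : V)
    (hexp : ∀ r ∈ Set.Ioo (0 : ℝ) ε,
      U r = (∑ k ∈ Finset.range (n - 1), r ^ k • c k) + (r ^ n * Real.log r) • H + Rm r)
    (hRm : Asymptotics.IsBigO (𝓝[>] (0 : ℝ)) Rm (fun r => r ^ n))
    (hreg : ∃ P : ℕ → V, Asymptotics.IsLittleO (𝓝[>] (0 : ℝ))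
      (fun r => U r - ∑ k ∈ Finset.range (n + 1), r ^ k • P k) (fun r => r ^ n)) :
    H = 0 := by
  classical
  obtain ⟨P, hP⟩ := hreg
  set a : ℕ → V := fun k => P k - if k < n - 1 then c k else 0 with ha
  set ψ : ℝ → V := fun r =>
    (r ^ n * Real.log r) • H - ∑ k ∈ Finset.range (n + 1), r ^ k • a k with hψdef
  have hmem : Set.Ioo (0 : ℝ) ε ∈ 𝓝[>] (0 : ℝ) := Ioo_mem_nhdsGT hε
  -- ψ = O(r^n)
  have hψO : ψ =O[𝓝[>] (0 : ℝ)] fun r => r ^ n := by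
    have heq : ∀ r ∈ Set.Ioo (0 : ℝ) ε,
        ψ r = (U r - ∑ k ∈ Finset.range (n + 1), r ^ k • P k) - Rm r := by
      intro r hr
      have hsum : ∑ k ∈ Finset.range (n + 1), r ^ k • (if k < n - 1 then c k else 0)
          = ∑ k ∈ Finset.range (n - 1), r ^ k • c k := by
        rw [← Finset.sum_subset (Finset.range_subset_range.2 (show n - 1 ≤ n + 1 by omega))
          (fun k _ hk => by rw [if_neg fun h => hk (Finset.mem_range.2 h), smul_zero])]
        exact Finset.sum_congr rfl fun k hk => by rw [if_pos (Finset.mem_range.1 hk)]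
      rw [hexp r hr, ← hsum]
      simp only [hψdef, ha, smul_sub, Finset.sum_sub_distrib]
      abel
    exact (hP.isBigO.sub hRm).congr'
      (eventually_of_mem hmem fun r hr => (heq r hr).symm) (EventuallyEq.refl _ _)
  -- the polynomial ∏ (X - 2^k)
  set p : Polynomial ℝ := ∏ k ∈ Finset.range n, (X - C ((2 : ℝ) ^ k)) with hp
  have hdeg : p.natDegree < n + 1 := by
    have h1 : p.natDegree ≤ ∑ k ∈ Finset.range n, (X - C ((2 : ℝ) ^ k)).natDegree :=
      natDegree_prod_le _ _
    have h2 : ∑ k ∈ Finset.range n, (X - C ((2 : ℝ) ^ k)).natDegree = n := by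
      simp only [natDegree_X_sub_C, Finset.sum_const, Finset.card_range, smul_eq_mul, mul_one]
    omega
  have hevalsum : ∀ x : ℝ, ∑ j ∈ Finset.range (n + 1), p.coeff j * x ^ j = p.eval x :=
    fun x => (eval_eq_sum_range' hdeg x).symm
  have hroot : ∀ k, k < n → p.eval ((2 : ℝ) ^ k) = 0 := by
    intro k hk
    rw [hp, eval_prod]
    exact Finset.prod_eq_zero (Finset.mem_range.2 hk) (by simp)
  set E : ℝ := p.eval ((2 : ℝ) ^ n) with hE
  have hEpos : 0 < E := by
    rw [hE, hp, eval_prod]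
    refine Finset.prod_pos fun k hk => ?_
    simp only [eval_sub, eval_X, eval_C, sub_pos]
    exact pow_lt_pow_right₀ one_lt_two (Finset.mem_range.1 hk)
  set B : ℝ := ∑ j ∈ Finset.range (n + 1), p.coeff j * ((2 : ℝ) ^ n) ^ j * j with hB
  -- the finite difference
  set F : ℝ → V := fun r => ∑ j ∈ Finset.range (n + 1), p.coeff j • ψ ((2 : ℝ) ^ j * r)
    with hF
  have key : ∀ r : ℝ, 0 < r →
      F r = (r ^ n * (E * Real.log r + B * Real.log 2)) • H - (E * r ^ n) • a n := by
    intro r hr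
    have hS1 : (∑ j ∈ Finset.range (n + 1),
          p.coeff j • ((((2 : ℝ) ^ j * r) ^ n * Real.log ((2 : ℝ) ^ j * r)) • H))
        = (r ^ n * (E * Real.log r + B * Real.log 2)) • H := by
      rw [Finset.sum_congr rfl fun j (_ : j ∈ Finset.range (n+1)) => smul_smul (p.coeff j) _ H,
        ← Finset.sum_smul]
      congr 1
      have : ∀ j ∈ Finset.range (n + 1),
          p.coeff j * (((2 : ℝ) ^ j * r) ^ n * Real.log ((2 : ℝ) ^ j * r))
          = p.coeff j * ((2 : ℝ) ^ n) ^ j * (r ^ n * Real.log r)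
            + p.coeff j * ((2 : ℝ) ^ n) ^ j * j * (r ^ n * Real.log 2) := by
        intro j _
        rw [Real.log_mul (by positivity) hr.ne', Real.log_pow, mul_pow, pow_right_comm]
        ring
      rw [Finset.sum_congr rfl (fun j hj => by rw [this j hj]),
        Finset.sum_add_distrib, ← Finset.sum_mul, ← Finset.sum_mul, hevalsum, ← hE, ← hB]
      ring
    have hS2 : (∑ j ∈ Finset.range (n + 1),
          p.coeff j • (∑ k ∈ Finset.range (n + 1), ((2 : ℝ) ^ j * r) ^ k • a k))
        = (E * r ^ n) • a n := by
      have step : ∀ j ∈ Finset.range (n + 1),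
          p.coeff j • (∑ k ∈ Finset.range (n + 1), ((2 : ℝ) ^ j * r) ^ k • a k)
          = ∑ k ∈ Finset.range (n + 1), (p.coeff j * ((2 : ℝ) ^ k) ^ j * r ^ k) • a k := by
        intro j _
        rw [Finset.smul_sum]
        refine Finset.sum_congr rfl fun k _ => ?_
        rw [smul_smul, mul_pow, pow_right_comm, mul_assoc]
      rw [Finset.sum_congr rfl step, Finset.sum_comm]
      rw [Finset.sum_eq_single_of_mem n (Finset.self_mem_range_succ n)]
      · rw [← Finset.sum_smul, ← Finset.sum_mul, hevalsum, ← hE]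
      · intro k hk hkn
        have hklt : k < n := by
          have := Finset.mem_range.1 hk; omega
        rw [← Finset.sum_smul, ← Finset.sum_mul, hevalsum, hroot k hklt, zero_mul, zero_smul]
    calc F r = ∑ j ∈ Finset.range (n + 1),
          (p.coeff j • ((((2 : ℝ) ^ j * r) ^ n * Real.log ((2 : ℝ) ^ j * r)) • H)
           - p.coeff j • (∑ k ∈ Finset.range (n + 1), ((2 : ℝ) ^ j * r) ^ k • a k)) := by
          rw [hF]
          exact Finset.sum_congr rfl fun j _ => by rw [hψdef, smul_sub]
      _ = _ := by rw [Finset.sum_sub_distrib, hS1, hS2]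
  -- F = O(r^n)
  have hFO : F =O[𝓝[>] (0 : ℝ)] fun r => r ^ n := by
    refine Asymptotics.IsBigO.fun_sum fun j _ => ?_
    have htend : Tendsto (fun r : ℝ => (2 : ℝ) ^ j * r) (𝓝[>] 0) (𝓝[>] 0) := by
      refine tendsto_nhdsWithin_of_tendsto_nhds_of_eventually_within _
        (((continuous_const.mul continuous_id).tendsto' 0 0 (by simp)).mono_left
          nhdsWithin_le_nhds) ?_
      exact eventually_mem_nhdsWithin.mono fun r (hr : (0:ℝ) < r) => mul_pos (by positivity) hr
    have h1 := hψO.comp_tendsto htend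
    have h2 : (fun r : ℝ => ((2 : ℝ) ^ j * r) ^ n) = fun r => ((2 : ℝ) ^ j) ^ n * r ^ n := by
      funext r; rw [mul_pow]
    refine ((h1.trans ?_).const_smul_left _)
    rw [Function.comp_def, h2]
    exact (Asymptotics.isBigO_refl _ _).const_mul_left _
  obtain ⟨C, hC⟩ := hFO.bound
  by_contra hH
  have hHpos : 0 < ‖H‖ := norm_pos_iff.2 hH
  set M : ℝ := (C + |E| * ‖a n‖) / ‖H‖ with hM
  have hlog : Tendsto (fun r : ℝ => E * Real.log r + B * Real.log 2) (𝓝[>] 0) atBot :=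
    tendsto_atBot_add_const_right _ _
      (Real.tendsto_log_nhdsGT_zero.const_mul_atBot hEpos)
  have hev : ∀ᶠ r in 𝓝[>] (0 : ℝ),
      E * Real.log r + B * Real.log 2 < -(M + 1) :=
    hlog.eventually (eventually_lt_atBot _)
  obtain ⟨r, hr1, hr2, hr3⟩ := (hC.and (hev.and self_mem_nhdsWithin)).exists
  have hrpos : (0 : ℝ) < r := hr3
  have hrn : (0 : ℝ) < r ^ n := pow_pos hrpos n
  -- lower bound on ‖F r‖
  have hFr := key r hrpos
  have hlb : r ^ n * |E * Real.log r + B * Real.log 2| * ‖H‖ - |E| * r ^ n * ‖a n‖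
      ≤ ‖F r‖ := by
    rw [hFr]
    have := norm_sub_norm_le ((r ^ n * (E * Real.log r + B * Real.log 2)) • H)
      ((E * r ^ n) • a n)
    rw [norm_smul, norm_smul, Real.norm_eq_abs, Real.norm_eq_abs, abs_mul, abs_mul,
      abs_of_pos hrn] at this
    exact this
  have hub : ‖F r‖ ≤ C * r ^ n := by
    have := hr1
    rwa [Real.norm_eq_abs, abs_of_pos hrn] at this
  have habs : M + 1 ≤ |E * Real.log r + B * Real.log 2| := by
    have : -(E * Real.log r + B * Real.log 2) > M + 1 := by linarith
    calc M + 1 ≤ -(E * Real.log r + B * Real.log 2) := le_of_lt this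
      _ ≤ |E * Real.log r + B * Real.log 2| := neg_le_abs _
  have hfinal : |E * Real.log r + B * Real.log 2| * ‖H‖ ≤ C + |E| * ‖a n‖ := by
    have h := hlb.trans hub
    have : r ^ n * (|E * Real.log r + B * Real.log 2| * ‖H‖)
        ≤ r ^ n * (C + |E| * ‖a n‖) := by nlinarith
    exact le_of_mul_le_mul_left this hrn
  have hMle : |E * Real.log r + B * Real.log 2| ≤ M := by
    rw [hM, le_div_iff₀ hHpos]
    exact hfinal
  nlinarith [habs, hMle]
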